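/- There is no universal exact masker: for r = dim H_A ≥ 2, there is no unitary U on H_A ⊗ H_B and fixed pure state |b⟩ ∈ H_B such that for all unit vectors |a⟩ ∈ H_A, both partial traces of U(|a⟩⊗|b⟩)(⟨a|⊗⟨b|)U† are independent of |a⟩. -/

import Mathlib

open Matrix Complex
open scoped ComplexOrder Classical

noncomputable def matSqrt {n : Type*} [Fintype n] [DecidableEq n]
    (A : Matrix n n ℂ) : Matrix n n ℂ :=
  if h : A.PosSemidef then
    (h.1.eigenvectorUnitary : Matrix n n ℂ) *
      diagonal ((↑) ∘ (fun i => Real.sqrt (h.1.eigenvalues i))) *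
      (star h.1.eigenvectorUnitary : Matrix n n ℂ)
  else 0

noncomputable def traceNorm {m n : Type*} [Fintype m] [Fintype n] [DecidableEq n]
    (A : Matrix m n ℂ) : ℝ :=
  ((matSqrt (Aᴴ * A)).trace).re

noncomputable def frobNorm {m n : Type*} [Fintype m] [Fintype n]
    (A : Matrix m n ℂ) : ℝ :=
  Real.sqrt (((Aᴴ * A).trace).re)

noncomputable def fidelity {n : Type*} [Fintype n] [DecidableEq n]
    (P Q : Matrix n n ℂ) : ℝ :=
  ((matSqrt (matSqrt P * Q * matSqrt P)).trace).re

/-- The outer product |ψ⟩⟨ψ| of a vector. -/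
noncomputable def outerMat {ι : Type*} (ψ : ι → ℂ) : Matrix ι ι ℂ :=
  fun p q => ψ p * (starRingEnd ℂ) (ψ q)

/-- Partial trace over the first (A) factor. -/
noncomputable def ptraceA {r s : ℕ} (ρ : Matrix (Fin r × Fin s) (Fin r × Fin s) ℂ) :
    Matrix (Fin s) (Fin s) ℂ :=
  fun k l => ∑ i : Fin r, ρ (i, k) (i, l)

/-- Partial trace over the second (B) factor. -/
noncomputable def ptraceB {r s : ℕ} (ρ : Matrix (Fin r × Fin s) (Fin r × Fin s) ℂ) :
    Matrix (Fin r) (Fin r) ℂ :=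
  fun i j => ∑ k : Fin s, ρ (i, k) (j, k)

/-- Generalized cross partial trace (over A) of the outer product of two vectors. -/
noncomputable def crossA {r s : ℕ} (u v : Fin r × Fin s → ℂ) : Matrix (Fin s) (Fin s) ℂ :=
  fun k l => ∑ i : Fin r, u (i, k) * (starRingEnd ℂ) (v (i, l))

lemma ptraceA_outer {r s : ℕ} (ψ : Fin r × Fin s → ℂ) :
    ptraceA (outerMat ψ) = crossA ψ ψ := rfl

lemma crossA_expand {r s : ℕ} (u v : Fin r × Fin s → ℂ) (α β : ℂ) :
    crossA (α • u + β • v) (α • u + β • v)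
      = (α * (starRingEnd ℂ) α) • crossA u u + (α * (starRingEnd ℂ) β) • crossA u v
        + (β * (starRingEnd ℂ) α) • crossA v u + (β * (starRingEnd ℂ) β) • crossA v v := by
  funext k l
  simp only [crossA, Matrix.add_apply, Matrix.smul_apply, Pi.add_apply, Pi.smul_apply,
    smul_eq_mul, map_add, _root_.map_mul, Finset.mul_sum, ← Finset.sum_add_distrib]
  refine Finset.sum_congr rfl fun i _ => ?_
  ring

/-- A matrix with `trace (Aᴴ * A) = 0` is zero. -/
lemma eq_zero_of_trace_conjTranspose_mul_self {n : Type*} [Fintype n] [DecidableEq n]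
    (A : Matrix n n ℂ) (h : (Aᴴ * A).trace = 0) : A = 0 := by
  have key : (Aᴴ * A).trace = ((∑ j, ∑ i, Complex.normSq (A i j) : ℝ) : ℂ) := by
    simp only [Matrix.trace, Matrix.diag, Matrix.mul_apply, Matrix.conjTranspose_apply]
    push_cast
    exact Finset.sum_congr rfl fun j _ => Finset.sum_congr rfl fun i _ =>
      (Complex.normSq_eq_conj_mul_self).symm
  rw [key, Complex.ofReal_eq_zero] at h
  have h2 : ∀ j ∈ Finset.univ, ∑ i, Complex.normSq (A i j) = 0 :=
    (Finset.sum_eq_zero_iff_of_nonneg (fun j _ =>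
      Finset.sum_nonneg fun i _ => Complex.normSq_nonneg _)).1 h
  ext i j
  have h3 := (Finset.sum_eq_zero_iff_of_nonneg
    (fun i _ => Complex.normSq_nonneg (A i j))).1 (h2 j (Finset.mem_univ j)) i (Finset.mem_univ i)
  simpa using Complex.normSq_eq_zero.1 h3

/-- No-masking theorem: there is no unitary `U` on `ℂ^r ⊗ ℂ^s` and fixed pure state `b`
such that for every unit vector `a`, both marginals of `U (a ⊗ b)` are fixed density
matrices `ρA, ρB` independent of `a`. -/
theorem stmt16 {r s : ℕ} (hr : 2 ≤ r) (hs : 2 ≤ s) :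
    ¬ ∃ (U : Matrix (Fin r × Fin s) (Fin r × Fin s) ℂ)
        (_ : U ∈ Matrix.unitaryGroup (Fin r × Fin s) ℂ)
        (b : Fin s → ℂ) (ρA : Matrix (Fin r) (Fin r) ℂ) (ρB : Matrix (Fin s) (Fin s) ℂ),
      (∑ k, ‖b k‖ ^ 2 = 1) ∧
      ρA.PosSemidef ∧ ρA.trace = 1 ∧ ρB.PosSemidef ∧ ρB.trace = 1 ∧
      ∀ a : Fin r → ℂ, (∑ j, ‖a j‖ ^ 2 = 1) →
        ptraceB (outerMat (U.mulVec (fun p => a p.1 * b p.2))) = ρA ∧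
        ptraceA (outerMat (U.mulVec (fun p => a p.1 * b p.2))) = ρB := by
  rintro ⟨U, hU, b, ρA, ρB, hb, hρA, hρAtr, hρB, hρBtr, hmask⟩
  have h0r : 0 < r := by omega
  have h1r : 1 < r := by omega
  set i0 : Fin r := ⟨0, h0r⟩ with hi0
  set i1 : Fin r := ⟨1, h1r⟩ with hi1
  have hne : i0 ≠ i1 := by
    simp [hi0, hi1, Fin.ext_iff]
  classical
  set e0 : Fin r → ℂ := Pi.single i0 1 with he0
  set e1 : Fin r → ℂ := Pi.single i1 1 with he1
  set f0 : Fin r × Fin s → ℂ := fun p => e0 p.1 * b p.2 with hf0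
  set f1 : Fin r × Fin s → ℂ := fun p => e1 p.1 * b p.2 with hf1
  set ψ0 : Fin r × Fin s → ℂ := U.mulVec f0 with hψ0
  set ψ1 : Fin r × Fin s → ℂ := U.mulVec f1 with hψ1
  -- For any α β with |α|² + |β|² = 1, the masking conditions hold for α•ψ0 + β•ψ1.
  have main : ∀ α β : ℂ, ‖α‖ ^ 2 + ‖β‖ ^ 2 = 1 →
      ptraceB (outerMat (α • ψ0 + β • ψ1)) = ρA ∧
      ptraceA (outerMat (α • ψ0 + β • ψ1)) = ρB := by
    intro α β hαβ
    set a : Fin r → ℂ := fun j => α * e0 j + β * e1 j with ha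
    have hnorm : ∑ j, ‖a j‖ ^ 2 = 1 := by
      have hzero : ∀ j ∈ Finset.univ, j ∉ ({i0, i1} : Finset (Fin r)) →
          ‖a j‖ ^ 2 = 0 := by
        intro j _ hj
        simp only [Finset.mem_insert, Finset.mem_singleton, not_or] at hj
        simp [ha, he0, he1, Pi.single_eq_of_ne hj.1, Pi.single_eq_of_ne hj.2]
      have hsub : ∑ j, ‖a j‖ ^ 2 = ∑ j ∈ ({i0, i1} : Finset (Fin r)),
          ‖a j‖ ^ 2 :=
        (Finset.sum_subset (Finset.subset_univ _) hzero).symm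
      rw [hsub, Finset.sum_insert (by simpa using hne), Finset.sum_singleton]
      have ha0 : a i0 = α := by
        simp [ha, he0, he1, Pi.single_eq_of_ne hne]
      have ha1 : a i1 = β := by
        simp [ha, he0, he1, Pi.single_eq_of_ne hne.symm]
      rw [ha0, ha1, hαβ]
    have hlin : (fun p : Fin r × Fin s => a p.1 * b p.2) = α • f0 + β • f1 := by
      funext p
      simp only [ha, hf0, hf1, Pi.add_apply, Pi.smul_apply, smul_eq_mul]
      ring
    have hvec : U.mulVec (fun p : Fin r × Fin s => a p.1 * b p.2) = α • ψ0 + β • ψ1 := by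
      rw [hlin, Matrix.mulVec_add, Matrix.mulVec_smul, Matrix.mulVec_smul]
    have := hmask a hnorm
    rw [hvec] at this
    exact this
  -- The four instances.
  have h10 := main 1 0 (by simp)
  have h01 := main 0 1 (by simp)
  set c : ℂ := (((Real.sqrt 2)⁻¹ : ℝ) : ℂ) with hc
  have hc_abs : ‖c‖ ^ 2 = 1 / 2 := by
    rw [hc, Complex.norm_real, Real.norm_eq_abs, _root_.abs_of_nonneg (by positivity)]
    rw [← Real.sqrt_inv, Real.sq_sqrt (by norm_num : (0:ℝ) ≤ 2⁻¹)]
    norm_num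
  have hcc : c * c = 1 / 2 := by
    rw [hc, ← Complex.ofReal_mul, ← mul_inv, Real.mul_self_sqrt (by norm_num)]
    norm_num
  have hcconj : (starRingEnd ℂ) c = c := Complex.conj_ofReal _
  have hplus := main c c (by rw [hc_abs]; norm_num)
  have habsI : ‖Complex.I * c‖ ^ 2 = 1 / 2 := by
    rw [norm_mul, Complex.norm_I, one_mul, hc_abs]
  have himag := main c (Complex.I * c) (by rw [hc_abs, habsI]; norm_num)
  -- Work with the A-side (ptraceA) to get the cross term zero.
  have C00 : crossA ψ0 ψ0 = ρB := by
    have := h10.2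
    rw [show (1:ℂ) • ψ0 + (0:ℂ) • ψ1 = ψ0 by simp] at this
    rw [← ptraceA_outer]; exact this
  have C11 : crossA ψ1 ψ1 = ρB := by
    have := h01.2
    rw [show (0:ℂ) • ψ0 + (1:ℂ) • ψ1 = ψ1 by simp] at this
    rw [← ptraceA_outer]; exact this
  have hexp_plus : (1/2 : ℂ) • crossA ψ0 ψ0 + (1/2 : ℂ) • crossA ψ0 ψ1
      + (1/2 : ℂ) • crossA ψ1 ψ0 + (1/2 : ℂ) • crossA ψ1 ψ1 = ρB := by
    have := hplus.2
    rw [ptraceA_outer, crossA_expand] at this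
    rw [hcconj, hcc] at this
    exact this
  have hexp_imag : (1/2 : ℂ) • crossA ψ0 ψ0 + (-(Complex.I/2)) • crossA ψ0 ψ1
      + (Complex.I/2) • crossA ψ1 ψ0 + (1/2 : ℂ) • crossA ψ1 ψ1 = ρB := by
    have := himag.2
    rw [ptraceA_outer, crossA_expand] at this
    rw [_root_.map_mul, hcconj, Complex.conj_I] at this
    have e1' : c * (-Complex.I * c) = -(Complex.I/2) := by
      rw [show c * (-Complex.I * c) = -Complex.I * (c * c) by ring, hcc]; ring
    have e2' : Complex.I * c * c = Complex.I / 2 := by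
      rw [mul_assoc, hcc]; ring
    have e3' : Complex.I * c * (-Complex.I * c) = 1/2 := by
      rw [show Complex.I * c * (-Complex.I * c) = -(Complex.I * Complex.I) * (c * c) by ring,
        Complex.I_mul_I, hcc]
      ring
    rw [hcc, e1', e2', e3'] at this
    exact this
  -- Derive crossA ψ0 ψ1 = 0.
  rw [C00, C11] at hexp_plus hexp_imag
  have hX : crossA ψ0 ψ1 = 0 := by
    funext k l
    have hp := congrFun (congrFun hexp_plus k) l
    have hi := congrFun (congrFun hexp_imag k) l
    simp only [Matrix.add_apply, Matrix.smul_apply, smul_eq_mul, Matrix.zero_apply] at hp hi ⊢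
    linear_combination hp + Complex.I * hi + ((crossA ψ0 ψ1 k l - crossA ψ1 ψ0 k l) * (1/2)) * Complex.I_sq
  -- B-side diagonal conditions.
  have hB0 : ptraceB (outerMat ψ0) = ρA := by
    have := h10.1
    rw [show (1:ℂ) • ψ0 + (0:ℂ) • ψ1 = ψ0 by simp] at this
    exact this
  have hB1 : ptraceB (outerMat ψ1) = ρA := by
    have := h01.1
    rw [show (0:ℂ) • ψ0 + (1:ℂ) • ψ1 = ψ1 by simp] at this
    exact this
  -- Reshape the states as r × s matrices.
  set M0 : Matrix (Fin r) (Fin s) ℂ := Matrix.of (fun i k => ψ0 (i, k)) with hM0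
  set M1 : Matrix (Fin r) (Fin s) ℂ := Matrix.of (fun i k => ψ1 (i, k)) with hM1
  have hcross : M1ᴴ * M0 = 0 := by
    ext l k
    have hx := congrFun (congrFun hX k) l
    simp only [crossA, Matrix.zero_apply] at hx
    simp only [Matrix.mul_apply, Matrix.zero_apply]
    rw [← hx]
    refine Finset.sum_congr rfl fun i _ => ?_
    simp only [Matrix.conjTranspose_apply, hM0, hM1, Matrix.of_apply]
    rw [RCLike.star_def]
    ring
  have hA0 : M0 * M0ᴴ = ρA := by
    ext i j
    have := congrFun (congrFun hB0 i) j
    rw [Matrix.mul_apply]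
    rw [← this]
    simp only [ptraceB, outerMat]
    refine Finset.sum_congr rfl fun k _ => ?_
    simp only [Matrix.conjTranspose_apply, hM0, Matrix.of_apply]
    rw [RCLike.star_def]
  have hA1 : M1 * M1ᴴ = ρA := by
    ext i j
    have := congrFun (congrFun hB1 i) j
    rw [Matrix.mul_apply]
    rw [← this]
    simp only [ptraceB, outerMat]
    refine Finset.sum_congr rfl fun k _ => ?_
    simp only [Matrix.conjTranspose_apply, hM1, Matrix.of_apply]
    rw [RCLike.star_def]
  -- ρA² = 0.
  have hsq : ρA * ρA = 0 := by
    nth_rewrite 1 [← hA1]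
    rw [← hA0, Matrix.mul_assoc, ← Matrix.mul_assoc M1ᴴ, hcross,
      Matrix.zero_mul, Matrix.mul_zero]
  have htr0 : (ρAᴴ * ρA).trace = 0 := by
    rw [hρA.1, hsq, Matrix.trace_zero]
  have hzero : ρA = 0 := eq_zero_of_trace_conjTranspose_mul_self ρA htr0
  rw [hzero, Matrix.trace_zero] at hρAtr
  exact zero_ne_one hρAtr
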